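/- Let r > 0 and let u : B_r → ℝ^k be of class C² with ‖Du‖_{C⁰(B_r)} < ∞. Then for every q ∈ B_r and all indices 1 ≤ i, j ≤ m one has the pointwise estimate |∂_i∂_j u(q)| ≤ (1 + ‖Du‖_{C⁰(B_r)}²)^{3/2} ‖A(q)‖, where ‖A(q)‖ is the tensorial norm of the second fundamental form of the graph of u at q. -/

import Mathlib

open Metric

noncomputable section

/-- The identification `ℝ^m × ℝ^k ≅ ℝ^n`, `n = m + k`, realized as the Euclidean space
indexed by `Fin m ⊕ Fin k`. -/
def emb {m k : ℕ} (a : EuclideanSpace ℝ (Fin m)) (b : EuclideanSpace ℝ (Fin k)) :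
    EuclideanSpace ℝ (Fin m ⊕ Fin k) :=
  (WithLp.equiv 2 (Fin m ⊕ Fin k → ℝ)).symm
    (Sum.elim (WithLp.equiv 2 (Fin m → ℝ) a) (WithLp.equiv 2 (Fin k → ℝ) b))

/-- The tangent space `T_x` of the graph of `u` at `(x, u(x))`: the subspace of
`ℝ^n = ℝ^m × ℝ^k` spanned by the vectors `(e_i, ∂_i u(x))`, `i = 1, …, m`. -/
def tangentSpaceOfGraph {m k : ℕ}
    (u : EuclideanSpace ℝ (Fin m) → EuclideanSpace ℝ (Fin k))
    (x : EuclideanSpace ℝ (Fin m)) : Submodule ℝ (EuclideanSpace ℝ (Fin m ⊕ Fin k)) :=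
  Submodule.span ℝ (Set.range fun i : Fin m =>
    emb (EuclideanSpace.single i 1) (fderiv ℝ u x (EuclideanSpace.single i 1)))

/-- The second partial derivative `∂_i ∂_j u(q) ∈ ℝ^k`. -/
def secondPartial {m k : ℕ}
    (u : EuclideanSpace ℝ (Fin m) → EuclideanSpace ℝ (Fin k))
    (q : EuclideanSpace ℝ (Fin m)) (i j : Fin m) : EuclideanSpace ℝ (Fin k) :=
  fderiv ℝ (fderiv ℝ u) q (EuclideanSpace.single i 1) (EuclideanSpace.single j 1)

/-- The second fundamental form `A_{ij}(q) = π_q^⊥(0, ∂_i∂_j u(q)) ∈ ℝ^n` of the graph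
of `u` at `q`, where `π_q^⊥` is the orthogonal projection onto `T_q^⊥`. -/
def sff {m k : ℕ}
    (u : EuclideanSpace ℝ (Fin m) → EuclideanSpace ℝ (Fin k))
    (q : EuclideanSpace ℝ (Fin m)) (i j : Fin m) : EuclideanSpace ℝ (Fin m ⊕ Fin k) :=
  (Submodule.orthogonalProjectionOnto (tangentSpaceOfGraph u q)ᗮ (emb 0 (secondPartial u q i j)) :
    EuclideanSpace ℝ (Fin m ⊕ Fin k))

/-- The induced metric `G(q) = I_m + Du(q)ᵗ Du(q)`, with entries
`g_{ij}(q) = δ_{ij} + ⟨∂_i u(q), ∂_j u(q)⟩`. -/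
def inducedMetric {m k : ℕ}
    (u : EuclideanSpace ℝ (Fin m) → EuclideanSpace ℝ (Fin k))
    (q : EuclideanSpace ℝ (Fin m)) : Matrix (Fin m) (Fin m) ℝ :=
  Matrix.of fun i j => (if i = j then (1 : ℝ) else 0) +
    (inner ℝ (fderiv ℝ u q (EuclideanSpace.single i 1))
      (fderiv ℝ u q (EuclideanSpace.single j 1)) : ℝ)

/-- The squared tensorial norm `‖A(q)‖² = ∑ g^{ia} g^{jb} ⟨A_{ij}, A_{ab}⟩` of the second
fundamental form of the graph of `u` at `q`, where `(g^{ia}) = G(q)⁻¹`. -/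
def sffNormSq {m k : ℕ}
    (u : EuclideanSpace ℝ (Fin m) → EuclideanSpace ℝ (Fin k))
    (q : EuclideanSpace ℝ (Fin m)) : ℝ :=
  ∑ i, ∑ j, ∑ a, ∑ b,
    (inducedMetric u q)⁻¹ i a * (inducedMetric u q)⁻¹ j b *
      (inner ℝ (sff u q i j) (sff u q a b) : ℝ)

/-- The tensorial norm `‖A(q)‖` of the second fundamental form of the graph of `u` at `q`. -/
def sffNorm {m k : ℕ}
    (u : EuclideanSpace ℝ (Fin m) → EuclideanSpace ℝ (Fin k))
    (q : EuclideanSpace ℝ (Fin m)) : ℝ :=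
  Real.sqrt (sffNormSq u q)

/-- The Frobenius norm `‖Du(x)‖ = (∑ j ‖∂_j u(x)‖²)^{1/2}` of the Jacobian of `u` at `x`. -/
def frobDu {m k : ℕ}
    (u : EuclideanSpace ℝ (Fin m) → EuclideanSpace ℝ (Fin k))
    (x : EuclideanSpace ℝ (Fin m)) : ℝ :=
  Real.sqrt (∑ j, ‖fderiv ℝ u x (EuclideanSpace.single j 1)‖ ^ 2)

section Aux
variable {m k : ℕ}

lemma emb_apply_inl (a : EuclideanSpace ℝ (Fin m)) (b : EuclideanSpace ℝ (Fin k)) (i : Fin m) :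
    emb a b (Sum.inl i) = a i := rfl

lemma emb_apply_inr (a : EuclideanSpace ℝ (Fin m)) (b : EuclideanSpace ℝ (Fin k)) (l : Fin k) :
    emb a b (Sum.inr l) = b l := rfl

/-- `emb` as a linear map on the product. -/
def embL : (EuclideanSpace ℝ (Fin m) × EuclideanSpace ℝ (Fin k)) →ₗ[ℝ]
    EuclideanSpace ℝ (Fin m ⊕ Fin k) where
  toFun p := emb p.1 p.2
  map_add' p q := by
    ext α
    cases α with
    | inl i => simp [emb_apply_inl]
    | inr l => simp [emb_apply_inr]
  map_smul' r p := by
    ext α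
    cases α with
    | inl i => simp [emb_apply_inl]
    | inr l => simp [emb_apply_inr]

lemma inner_emb (a c : EuclideanSpace ℝ (Fin m)) (b d : EuclideanSpace ℝ (Fin k)) :
    (inner ℝ (emb a b) (emb c d) : ℝ) = (inner ℝ a c : ℝ) + (inner ℝ b d : ℝ) := by
  simp [PiLp.inner_apply, RCLike.inner_apply, Fintype.sum_sum_type, emb_apply_inl, emb_apply_inr]

lemma norm_emb_sq (a : EuclideanSpace ℝ (Fin m)) (b : EuclideanSpace ℝ (Fin k)) :
    ‖emb a b‖ ^ 2 = ‖a‖ ^ 2 + ‖b‖ ^ 2 := by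
  rw [← real_inner_self_eq_norm_sq, ← real_inner_self_eq_norm_sq, ← real_inner_self_eq_norm_sq,
    inner_emb]

end Aux
section MatrixAux
open Matrix
open scoped MatrixOrder
variable {p : ℕ}

lemma sum3_rot {M : Type*} [AddCommMonoid M] {ι₁ ι₂ ι₃ : Type*} [Fintype ι₁] [Fintype ι₂]
    [Fintype ι₃] (f : ι₁ → ι₂ → ι₃ → M) :
    ∑ i, ∑ j, ∑ q, f i j q = ∑ q, ∑ i, ∑ j, f i j q := by
  rw [show (∑ i, ∑ j, ∑ q, f i j q) = ∑ i, ∑ q, ∑ j, f i j q from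
    Finset.sum_congr rfl fun i _ => Finset.sum_comm, Finset.sum_comm]

lemma trace_sq_nonneg_of_symm (B : Matrix (Fin p) (Fin p) ℝ) (hB : Bᵀ = B) :
    0 ≤ (B * B).trace := by
  have h : (B * B).trace = ∑ i, ∑ j, B i j ^ 2 := by
    simp only [Matrix.trace, Matrix.diag, Matrix.mul_apply]
    refine Finset.sum_congr rfl fun i _ => Finset.sum_congr rfl fun j _ => ?_
    have h2 : B j i = B i j := congrFun (congrFun hB i) j
    rw [h2]; ring
  rw [h]; positivity

lemma trace_psd_mul_sq_nonneg (T C : Matrix (Fin p) (Fin p) ℝ) (hT : T.PosSemidef) :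
    0 ≤ (T * (C * Cᵀ)).trace := by
  have hL : (T * (C * Cᵀ)).trace = ∑ i, ∑ j, ∑ q, T i j * C j q * C i q := by
    simp only [Matrix.trace, Matrix.diag, Matrix.mul_apply, Matrix.transpose_apply,
      Finset.mul_sum]
    exact Finset.sum_congr rfl fun i _ => Finset.sum_congr rfl fun j _ =>
      Finset.sum_congr rfl fun q _ => by ring
  rw [hL, sum3_rot]
  refine Finset.sum_nonneg fun q _ => ?_
  have h := hT.dotProduct_mulVec_nonneg fun i => C i q
  simp only [dotProduct, Matrix.mulVec, RCLike.re_to_real, star_trivial] at h ⊢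
  refine le_trans (by simpa [dotProduct, Matrix.mulVec, Finset.mul_sum] using h) (le_of_eq ?_)
  exact Finset.sum_congr rfl fun i _ => Finset.sum_congr rfl fun j _ => by ring

lemma key_trace (H S : Matrix (Fin p) (Fin p) ℝ) (hS : Sᵀ = S)
    (lam : ℝ) (hlam : 0 ≤ lam) (hT : (H - lam • 1).PosSemidef) :
    lam ^ 2 * (S * S).trace ≤ (H * S * H * S).trace := by
  set T := H - lam • (1 : Matrix (Fin p) (Fin p) ℝ) with hTdef
  have hHeq : H = lam • 1 + T := by rw [hTdef]; abel
  have hTsym : Tᵀ = T := by simpa using hT.1.eq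
  set R := CFC.sqrt T with hRdef
  have hR2 : R * R = T := by rw [← pow_two]; exact CFC.sq_sqrt T hT.nonneg
  have hRsym : Rᵀ = R := by simpa using (CFC.sqrt_nonneg T).posSemidef.1.eq
  have expand : H * S * H * S =
      (lam ^ 2) • (S * S) + lam • (S * (T * S)) + lam • (T * S * S) + T * S * T * S := by
    rw [hHeq]; noncomm_ring; module
  have h1 : 0 ≤ (S * (T * S)).trace := by
    rw [Matrix.trace_mul_comm]
    have e : T * S * S = T * (S * Sᵀ) := by rw [hS]; noncomm_ring
    rw [e]; exact trace_psd_mul_sq_nonneg T S hT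
  have h2 : 0 ≤ (T * S * S).trace := by
    have e : T * S * S = T * (S * Sᵀ) := by rw [hS]; noncomm_ring
    rw [e]; exact trace_psd_mul_sq_nonneg T S hT
  have h3 : 0 ≤ (T * S * T * S).trace := by
    have e : T * S * T * S = R * (R * S * R * R * S) := by rw [← hR2]; noncomm_ring
    rw [e, Matrix.trace_mul_comm]
    have e2 : R * S * R * R * S * R = (R * S * R) * (R * S * R) := by noncomm_ring
    rw [e2]
    refine trace_sq_nonneg_of_symm _ ?_
    calc (R * S * R)ᵀ = Rᵀ * (Sᵀ * Rᵀ) := by simp [Matrix.transpose_mul]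
    _ = R * S * R := by rw [hS, hRsym]; noncomm_ring
  have htr : (H * S * H * S).trace =
      lam ^ 2 * (S * S).trace + lam * (S * (T * S)).trace + lam * (T * S * S).trace
        + (T * S * T * S).trace := by
    rw [expand]; simp [Matrix.trace_add, Matrix.trace_smul, smul_eq_mul]
  nlinarith [mul_nonneg hlam h1, mul_nonneg hlam h2]

end MatrixAux
section InvAux
open Matrix
open scoped MatrixOrder
variable {p : ℕ}

lemma dot_mulVec_symm (A : Matrix (Fin p) (Fin p) ℝ) (hA : Aᵀ = A) (x y : Fin p → ℝ) :
    (A *ᵥ x) ⬝ᵥ y = x ⬝ᵥ (A *ᵥ y) := by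
  simp only [dotProduct, Matrix.mulVec, Finset.sum_mul, Finset.mul_sum]
  rw [Finset.sum_comm]
  refine Finset.sum_congr rfl fun i _ => Finset.sum_congr rfl fun j _ => ?_
  have h : A j i = A i j := congrFun (congrFun hA i) j
  rw [h]; ring

set_option maxHeartbeats 1000000 in
lemma inv_quad_lower (G : Matrix (Fin p) (Fin p) ℝ) (hsym : Gᵀ = G) (hdet : IsUnit G.det)
    (hpsd : G.PosSemidef) (c : ℝ) (hc : 0 < c)
    (hup : ∀ x : Fin p → ℝ, x ⬝ᵥ G *ᵥ x ≤ c * ∑ i, x i ^ 2) (y : Fin p → ℝ) :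
    c⁻¹ * ∑ i, y i ^ 2 ≤ y ⬝ᵥ G⁻¹ *ᵥ y := by
  obtain ⟨x, hx⟩ : ∃ x, x = G⁻¹ *ᵥ y := ⟨_, rfl⟩
  have hGx : G *ᵥ x = y := by
    rw [hx, Matrix.mulVec_mulVec, Matrix.mul_nonsing_inv _ hdet, Matrix.one_mulVec]
  set R := CFC.sqrt G with hRdef
  have hR2 : R * R = G := by rw [← pow_two]; exact CFC.sq_sqrt G hpsd.nonneg
  have hRsym : Rᵀ = R := by simpa using (CFC.sqrt_nonneg G).posSemidef.1.eq
  have e1 : y ⬝ᵥ G⁻¹ *ᵥ y = x ⬝ᵥ (G *ᵥ x) := by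
    calc y ⬝ᵥ G⁻¹ *ᵥ y = y ⬝ᵥ x := by rw [← hx]
      _ = (G *ᵥ x) ⬝ᵥ x := by rw [hGx]
      _ = x ⬝ᵥ (G *ᵥ x) := dot_mulVec_symm G hsym x x
  have hGG : R * (G * R) = G * G := by rw [← hR2]; simp only [Matrix.mul_assoc]
  have e2 : (∑ i, y i ^ 2) = (R *ᵥ x) ⬝ᵥ (G *ᵥ (R *ᵥ x)) := by
    calc (∑ i, y i ^ 2) = y ⬝ᵥ y := by simp [dotProduct, pow_two]
      _ = (G *ᵥ x) ⬝ᵥ (G *ᵥ x) := by rw [hGx]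
      _ = x ⬝ᵥ (G *ᵥ (G *ᵥ x)) := dot_mulVec_symm G hsym x (G *ᵥ x)
      _ = x ⬝ᵥ ((G * G) *ᵥ x) := by rw [Matrix.mulVec_mulVec]
      _ = x ⬝ᵥ ((R * (G * R)) *ᵥ x) := by rw [hGG]
      _ = x ⬝ᵥ (R *ᵥ (G *ᵥ (R *ᵥ x))) := by simp only [Matrix.mulVec_mulVec]
      _ = (R *ᵥ x) ⬝ᵥ (G *ᵥ (R *ᵥ x)) := (dot_mulVec_symm R hRsym x _).symm
  have e3 : (∑ i, (R *ᵥ x) i ^ 2) = x ⬝ᵥ (G *ᵥ x) := by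
    calc (∑ i, (R *ᵥ x) i ^ 2) = (R *ᵥ x) ⬝ᵥ (R *ᵥ x) := by simp [dotProduct, pow_two]
      _ = x ⬝ᵥ (R *ᵥ (R *ᵥ x)) := dot_mulVec_symm R hRsym x _
      _ = x ⬝ᵥ ((R * R) *ᵥ x) := by rw [Matrix.mulVec_mulVec]
      _ = x ⬝ᵥ (G *ᵥ x) := by rw [hR2]
  have key : (∑ i, y i ^ 2) ≤ c * (y ⬝ᵥ G⁻¹ *ᵥ y) := by
    rw [e2, e1, ← e3]
    exact hup (R *ᵥ x)
  rw [inv_mul_le_iff₀ hc]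
  exact key

end InvAux
section MetricAux
open Matrix
variable {m k : ℕ}
variable (u : EuclideanSpace ℝ (Fin m) → EuclideanSpace ℝ (Fin k))
variable (q : EuclideanSpace ℝ (Fin m))

lemma norm_sum_smul_sq_le (x : Fin m → ℝ) (d : Fin m → EuclideanSpace ℝ (Fin k)) :
    ‖∑ i, x i • d i‖ ^ 2 ≤ (∑ i, x i ^ 2) * (∑ i, ‖d i‖ ^ 2) := by
  have h1 : ‖∑ i, x i • d i‖ ≤ ∑ i, |x i| * ‖d i‖ := by
    refine le_trans (norm_sum_le _ _) (le_of_eq ?_)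
    exact Finset.sum_congr rfl fun i _ => by rw [norm_smul, Real.norm_eq_abs]
  have h2 : ‖∑ i, x i • d i‖ ^ 2 ≤ (∑ i, |x i| * ‖d i‖) ^ 2 :=
    pow_le_pow_left₀ (norm_nonneg _) h1 2
  refine h2.trans ?_
  refine (Finset.sum_mul_sq_le_sq_mul_sq Finset.univ _ _).trans (le_of_eq ?_)
  simp [sq_abs]

lemma inducedMetric_quad (x : Fin m → ℝ) :
    x ⬝ᵥ (inducedMetric u q) *ᵥ x
      = (∑ i, x i ^ 2) + ‖∑ i, x i • fderiv ℝ u q (EuclideanSpace.single i 1)‖ ^ 2 := by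
  set d : Fin m → EuclideanSpace ℝ (Fin k) := fun i => fderiv ℝ u q (EuclideanSpace.single i 1)
    with hd
  have hnorm : ‖∑ i, x i • d i‖ ^ 2 = ∑ i, ∑ j, x i * x j * (inner ℝ (d i) (d j) : ℝ) := by
    rw [← real_inner_self_eq_norm_sq, sum_inner]
    refine Finset.sum_congr rfl fun i _ => ?_
    rw [real_inner_smul_left, inner_sum]
    rw [Finset.mul_sum]
    refine Finset.sum_congr rfl fun j _ => ?_
    rw [real_inner_smul_right]; ring
  have hexp : x ⬝ᵥ (inducedMetric u q) *ᵥ x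
      = ∑ i, ∑ j, (x i * x j * (if i = j then (1:ℝ) else 0) + x i * x j * (inner ℝ (d i) (d j) : ℝ)) := by
    simp only [dotProduct, Matrix.mulVec, inducedMetric, Matrix.of_apply, Finset.mul_sum,
      Finset.sum_mul]
    refine Finset.sum_congr rfl fun i _ => Finset.sum_congr rfl fun j _ => by ring
  rw [hexp, hnorm]
  rw [show (∑ i, ∑ j, (x i * x j * (if i = j then (1:ℝ) else 0) + x i * x j * (inner ℝ (d i) (d j) : ℝ)))
      = (∑ i, ∑ j, x i * x j * (if i = j then (1:ℝ) else 0))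
        + ∑ i, ∑ j, x i * x j * (inner ℝ (d i) (d j) : ℝ) by
    rw [← Finset.sum_add_distrib]
    exact Finset.sum_congr rfl fun i _ => Finset.sum_add_distrib]
  congr 1
  refine Finset.sum_congr rfl fun i _ => ?_
  simp [mul_ite, Finset.sum_ite_eq, pow_two]

lemma inducedMetric_symm : (inducedMetric u q)ᵀ = inducedMetric u q := by
  ext i j
  simp only [Matrix.transpose_apply, inducedMetric, Matrix.of_apply]
  rw [real_inner_comm]
  congr 1
  simp [eq_comm]

lemma inducedMetric_herm : (inducedMetric u q).IsHermitian := by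
  have h := inducedMetric_symm u q
  rw [Matrix.IsHermitian, Matrix.conjTranspose]
  convert h using 1; ext i j; simp

end MetricAux
section MetricAux2
open Matrix
variable {m k : ℕ}
variable (u : EuclideanSpace ℝ (Fin m) → EuclideanSpace ℝ (Fin k))
variable (q : EuclideanSpace ℝ (Fin m))

lemma inducedMetric_psd : (inducedMetric u q).PosSemidef := by
  refine posSemidef_iff_dotProduct_mulVec.mpr ⟨inducedMetric_herm u q, fun x => ?_⟩
  have h := inducedMetric_quad u q x
  have hq : 0 ≤ x ⬝ᵥ (inducedMetric u q) *ᵥ x := by rw [h]; positivity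
  simpa using hq

lemma inducedMetric_det : IsUnit (inducedMetric u q).det := by
  have hpd : (inducedMetric u q).PosDef := by
    refine posDef_iff_dotProduct_mulVec.mpr ⟨inducedMetric_herm u q, fun x hx => ?_⟩
    have h := inducedMetric_quad u q x
    obtain ⟨i0, hi0⟩ : ∃ i, x i ≠ 0 := by
      by_contra hc; push_neg at hc; exact hx (funext fun i => hc i)
    have hpos : 0 < ∑ i, x i ^ 2 :=
      Finset.sum_pos' (fun i _ => sq_nonneg _) ⟨i0, Finset.mem_univ _, by positivity⟩
    have h2 : 0 < x ⬝ᵥ (inducedMetric u q) *ᵥ x := by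
      rw [h]
      have := sq_nonneg ‖∑ i, x i • fderiv ℝ u q (EuclideanSpace.single i 1)‖
      linarith
    simpa using h2
  exact isUnit_iff_ne_zero.mpr (ne_of_gt hpd.det_pos)

lemma inducedMetric_upper (M : ℝ)
    (hd : ∑ i, ‖fderiv ℝ u q (EuclideanSpace.single i 1)‖ ^ 2 ≤ M ^ 2) :
    ∀ x : Fin m → ℝ, x ⬝ᵥ (inducedMetric u q) *ᵥ x ≤ (1 + M ^ 2) * ∑ i, x i ^ 2 := by
  intro x
  rw [inducedMetric_quad]
  have h := norm_sum_smul_sq_le x (fun i => fderiv ℝ u q (EuclideanSpace.single i 1))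
  have hs : 0 ≤ ∑ i, x i ^ 2 := by positivity
  nlinarith [mul_le_mul_of_nonneg_left hd hs]

lemma inducedMetric_inv_lower (M : ℝ)
    (hd : ∑ i, ‖fderiv ℝ u q (EuclideanSpace.single i 1)‖ ^ 2 ≤ M ^ 2) (y : Fin m → ℝ) :
    ((1 : ℝ) + M ^ 2)⁻¹ * ∑ i, y i ^ 2 ≤ y ⬝ᵥ (inducedMetric u q)⁻¹ *ᵥ y :=
  inv_quad_lower _ (inducedMetric_symm u q) (inducedMetric_det u q) (inducedMetric_psd u q)
    _ (by positivity) (inducedMetric_upper u q M hd) y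

lemma inducedMetric_inv_symm : ((inducedMetric u q)⁻¹)ᵀ = (inducedMetric u q)⁻¹ := by
  rw [Matrix.transpose_nonsing_inv, inducedMetric_symm]

end MetricAux2
section ProjAux
variable {m k : ℕ}
variable (u : EuclideanSpace ℝ (Fin m) → EuclideanSpace ℝ (Fin k))
variable (q : EuclideanSpace ℝ (Fin m))

lemma norm_single_sum_sq (a : Fin m → ℝ) :
    ‖∑ i, a i • (EuclideanSpace.single i (1:ℝ) : EuclideanSpace ℝ (Fin m))‖ ^ 2
      = ∑ i, a i ^ 2 := by
  rw [← real_inner_self_eq_norm_sq, sum_inner]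
  simp [inner_sum, real_inner_smul_left, real_inner_smul_right, EuclideanSpace.inner_single_left,
    EuclideanSpace.single_apply, mul_ite, Finset.sum_ite_eq, pow_two]

lemma emb_sub_sum_eq (w : EuclideanSpace ℝ (Fin k)) (a : Fin m → ℝ)
    (s : Fin m → EuclideanSpace ℝ (Fin m)) (t : Fin m → EuclideanSpace ℝ (Fin k)) :
    emb 0 w - ∑ i', a i' • emb (s i') (t i')
      = emb (0 - ∑ i', a i' • s i') (w - ∑ i', a i' • t i') := by
  calc emb 0 w - ∑ i', a i' • emb (s i') (t i')
      = embL (((0 : EuclideanSpace ℝ (Fin m)), w) - ∑ i', a i' • (s i', t i')) := by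
        rw [map_sub, map_sum]; simp only [map_smul]; rfl
    _ = emb (0 - ∑ i', a i' • s i') (w - ∑ i', a i' • t i') := by
        rw [show (((0 : EuclideanSpace ℝ (Fin m)), w) - ∑ i', a i' • (s i', t i'))
            = (0 - ∑ i', a i' • s i', w - ∑ i', a i' • t i') from by
          rw [Prod.ext_iff]; simp [Prod.fst_sum, Prod.snd_sum]]
        rfl

lemma sff_eq (i j : Fin m) :
    sff u q i j = emb 0 (secondPartial u q i j)
      - (Submodule.orthogonalProjectionOnto (tangentSpaceOfGraph u q) (emb 0 (secondPartial u q i j)) :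
          EuclideanSpace ℝ (Fin m ⊕ Fin k)) := by
  rw [sff, Submodule.orthogonalProjectionOnto_orthogonal]; rfl

lemma sff_sq_lower (i j : Fin m) (M : ℝ) (hM : 0 ≤ M)
    (hd : ∑ i', ‖fderiv ℝ u q (EuclideanSpace.single i' 1)‖ ^ 2 ≤ M ^ 2) :
    ‖secondPartial u q i j‖ ^ 2 ≤ (1 + M ^ 2) * ‖sff u q i j‖ ^ 2 := by
  set w := secondPartial u q i j with hw
  have hmem : (↑(Submodule.orthogonalProjectionOnto (tangentSpaceOfGraph u q) (emb 0 w)) :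
      EuclideanSpace ℝ (Fin m ⊕ Fin k)) ∈ tangentSpaceOfGraph u q := Submodule.coe_mem _
  rw [tangentSpaceOfGraph, Submodule.mem_span_range_iff_exists_fun] at hmem
  obtain ⟨a, ha⟩ := hmem
  have hz : sff u q i j
      = emb (0 - ∑ i', a i' • EuclideanSpace.single i' 1)
          (w - ∑ i', a i' • fderiv ℝ u q (EuclideanSpace.single i' 1)) := by
    rw [sff_eq, ← hw]
    unfold tangentSpaceOfGraph
    rw [← ha, emb_sub_sum_eq]
  have hnormz : ‖sff u q i j‖ ^ 2
      = (∑ i', a i' ^ 2)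
        + ‖w - ∑ i', a i' • fderiv ℝ u q (EuclideanSpace.single i' 1)‖ ^ 2 := by
    rw [hz, norm_emb_sq, zero_sub, norm_neg, norm_single_sum_sq]
  set Y := ∑ i', a i' • fderiv ℝ u q (EuclideanSpace.single i' 1) with hY
  have hYsq : ‖Y‖ ^ 2 ≤ (∑ i', a i' ^ 2) * M ^ 2 := by
    refine (norm_sum_smul_sq_le a _).trans ?_
    have hs : (0:ℝ) ≤ ∑ i', a i' ^ 2 := by positivity
    exact mul_le_mul_of_nonneg_left hd hs
  set s := Real.sqrt (∑ i', a i' ^ 2) with hsdef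
  have hs2 : s ^ 2 = ∑ i', a i' ^ 2 := Real.sq_sqrt (by positivity)
  have hs0 : 0 ≤ s := Real.sqrt_nonneg _
  have hYb : ‖Y‖ ≤ M * s := by
    have h1 : ‖Y‖ ^ 2 ≤ (M * s) ^ 2 := by rw [mul_pow, hs2]; nlinarith
    have h2 := Real.sqrt_le_sqrt h1
    rwa [Real.sqrt_sq (norm_nonneg _), Real.sqrt_sq (by positivity)] at h2
  have htw : ‖w‖ ≤ ‖w - Y‖ + ‖Y‖ := by
    calc ‖w‖ = ‖(w - Y) + Y‖ := by rw [sub_add_cancel]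
      _ ≤ ‖w - Y‖ + ‖Y‖ := norm_add_le _ _
  have hwle : ‖w‖ ≤ ‖w - Y‖ + M * s := le_trans htw (by linarith)
  rw [hnormz, ← hs2]
  have ht0 : 0 ≤ ‖w - Y‖ := norm_nonneg _
  nlinarith [mul_self_le_mul_self (norm_nonneg w) hwle, sq_nonneg (M * ‖w - Y‖ - s)]

end ProjAux
section TraceAux
open Matrix
variable {p : ℕ}

lemma sum4_perm {M : Type*} [AddCommMonoid M] {ι1 ι2 ι3 ι4 : Type*}
    [Fintype ι1] [Fintype ι2] [Fintype ι3] [Fintype ι4] (f : ι1 → ι2 → ι3 → ι4 → M) :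
    ∑ i, ∑ j, ∑ a, ∑ b, f i j a b = ∑ a, ∑ b, ∑ j, ∑ i, f i j a b := by
  calc ∑ i, ∑ j, ∑ a, ∑ b, f i j a b
      = ∑ i, ∑ a, ∑ j, ∑ b, f i j a b :=
        Finset.sum_congr rfl fun i _ => Finset.sum_comm
    _ = ∑ a, ∑ i, ∑ j, ∑ b, f i j a b := Finset.sum_comm
    _ = ∑ a, ∑ i, ∑ b, ∑ j, f i j a b :=
        Finset.sum_congr rfl fun a _ => Finset.sum_congr rfl fun i _ => Finset.sum_comm
    _ = ∑ a, ∑ b, ∑ i, ∑ j, f i j a b :=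
        Finset.sum_congr rfl fun a _ => Finset.sum_comm
    _ = ∑ a, ∑ b, ∑ j, ∑ i, f i j a b :=
        Finset.sum_congr rfl fun a _ => Finset.sum_congr rfl fun b _ => Finset.sum_comm

lemma sum5_rot {M : Type*} [AddCommMonoid M] {ι1 ι2 ι3 ι4 ι5 : Type*}
    [Fintype ι1] [Fintype ι2] [Fintype ι3] [Fintype ι4] [Fintype ι5]
    (f : ι1 → ι2 → ι3 → ι4 → ι5 → M) :
    ∑ i, ∑ j, ∑ a, ∑ b, ∑ α, f i j a b α = ∑ α, ∑ i, ∑ j, ∑ a, ∑ b, f i j a b α := by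
  calc ∑ i, ∑ j, ∑ a, ∑ b, ∑ α, f i j a b α
      = ∑ i, ∑ j, ∑ a, ∑ α, ∑ b, f i j a b α :=
        Finset.sum_congr rfl fun i _ => Finset.sum_congr rfl fun j _ =>
          Finset.sum_congr rfl fun a _ => Finset.sum_comm
    _ = ∑ i, ∑ j, ∑ α, ∑ a, ∑ b, f i j a b α :=
        Finset.sum_congr rfl fun i _ => Finset.sum_congr rfl fun j _ => Finset.sum_comm
    _ = ∑ i, ∑ α, ∑ j, ∑ a, ∑ b, f i j a b α :=
        Finset.sum_congr rfl fun i _ => Finset.sum_comm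
    _ = ∑ α, ∑ i, ∑ j, ∑ a, ∑ b, f i j a b α := Finset.sum_comm

lemma trace_mul_self_eq (B : Matrix (Fin p) (Fin p) ℝ) (hB : Bᵀ = B) :
    (B * B).trace = ∑ i, ∑ j, B i j ^ 2 := by
  simp only [Matrix.trace, Matrix.diag, Matrix.mul_apply]
  refine Finset.sum_congr rfl fun i _ => Finset.sum_congr rfl fun j _ => ?_
  have h2 : B j i = B i j := congrFun (congrFun hB i) j
  rw [h2]; ring

lemma quad_sum_eq_trace (H S : Matrix (Fin p) (Fin p) ℝ) :
    (∑ i, ∑ j, ∑ a, ∑ b, H i a * H j b * (S i j * S a b)) = (Hᵀ * S * H * Sᵀ).trace := by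
  have hR : (Hᵀ * S * H * Sᵀ).trace = ∑ a, ∑ b, ∑ j, ∑ i, H i a * H j b * (S i j * S a b) := by
    simp only [Matrix.trace, Matrix.diag, Matrix.mul_apply, Matrix.transpose_apply,
      Finset.sum_mul, Finset.mul_sum]
    refine Finset.sum_congr rfl fun a _ => Finset.sum_congr rfl fun b _ =>
      Finset.sum_congr rfl fun j _ => Finset.sum_congr rfl fun i _ => by ring
  rw [hR, sum4_perm]

end TraceAux
open Matrix

/-- Let `r > 0` and let `u : B_r → ℝ^k` be of class `C²` with
`‖Du‖_{C⁰(B_r)} ≤ M < ∞`. Then for every `q ∈ B_r` and all indices `i, j`,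
`|∂_i∂_j u(q)| ≤ (1 + M²)^{3/2} ‖A(q)‖`, where `‖A(q)‖` is the tensorial norm of the
second fundamental form of the graph of `u` at `q`. -/
theorem stmt3 {m k : ℕ} (hm : 1 ≤ m) (hk : 1 ≤ k)
    (r : ℝ) (hr : 0 < r)
    (u : EuclideanSpace ℝ (Fin m) → EuclideanSpace ℝ (Fin k))
    (hu : ContDiffOn ℝ 2 u (ball 0 r))
    (M : ℝ) (hM : ∀ x ∈ ball (0 : EuclideanSpace ℝ (Fin m)) r, frobDu u x ≤ M)
    (q : EuclideanSpace ℝ (Fin m)) (hq : q ∈ ball (0 : EuclideanSpace ℝ (Fin m)) r)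
    (i j : Fin m) :
    ‖secondPartial u q i j‖ ≤ (1 + M ^ 2) ^ ((3 : ℝ) / 2) * sffNorm u q := by
  classical
  have hM0 : 0 ≤ M := le_trans (Real.sqrt_nonneg _) (hM q hq)
  set c : ℝ := 1 + M ^ 2 with hc_def
  have hc : 0 < c := by rw [hc_def]; positivity
  have hd : ∑ i', ‖fderiv ℝ u q (EuclideanSpace.single i' 1)‖ ^ 2 ≤ M ^ 2 := by
    have h1 := hM q hq
    rw [frobDu] at h1
    have h2 := pow_le_pow_left₀ (Real.sqrt_nonneg _) h1 2
    rwa [Real.sq_sqrt (by positivity)] at h2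
  -- symmetry of the second derivative
  have hCD : ContDiffAt ℝ 2 u q := hu.contDiffAt (isOpen_ball.mem_nhds hq)
  have hsd : IsSymmSndFDerivAt ℝ u q := hCD.isSymmSndFDerivAt (by simp)
  have hsp : ∀ i' j', secondPartial u q i' j' = secondPartial u q j' i' := fun i' j' => by
    rw [secondPartial, secondPartial]; exact hsd _ _
  have hsff : ∀ i' j', sff u q i' j' = sff u q j' i' := fun i' j' => by
    rw [sff, sff, hsp i' j']
  set H : Matrix (Fin m) (Fin m) ℝ := (inducedMetric u q)⁻¹ with hH_def
  have hHsym : Hᵀ = H := inducedMetric_inv_symm u q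
  set w := secondPartial u q i j with hw_def
  set S : (Fin m ⊕ Fin k) → Matrix (Fin m) (Fin m) ℝ :=
    fun α => Matrix.of fun i' j' => sff u q i' j' α with hS_def
  have hSsym : ∀ α, (S α)ᵀ = S α := fun α => by
    ext i' j'
    show sff u q j' i' α = sff u q i' j' α
    rw [hsff j' i']
  have hSnorm : ∀ i' j', (∑ α, (S α i' j') ^ 2) = ‖sff u q i' j'‖ ^ 2 := fun i' j' => by
    rw [EuclideanSpace.norm_eq, Real.sq_sqrt (by positivity)]
    simp [hS_def]
  -- Step A : sffNormSq as a sum of traces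
  have hA : sffNormSq u q = ∑ α, ((H * S α) * H * S α).trace := by
    rw [sffNormSq]
    calc (∑ i', ∑ j', ∑ a, ∑ b, (inducedMetric u q)⁻¹ i' a * (inducedMetric u q)⁻¹ j' b *
          (inner ℝ (sff u q i' j') (sff u q a b) : ℝ))
        = ∑ i', ∑ j', ∑ a, ∑ b, ∑ α, H i' a * H j' b * (S α i' j' * S α a b) := by
          refine Finset.sum_congr rfl fun i' _ => Finset.sum_congr rfl fun j' _ =>
            Finset.sum_congr rfl fun a _ => Finset.sum_congr rfl fun b _ => ?_
          have h1 : (inner ℝ (sff u q i' j') (sff u q a b) : ℝ) = ∑ α, S α i' j' * S α a b := by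
            simp [hS_def, PiLp.inner_apply, RCLike.inner_apply, mul_comm]
          rw [h1, Finset.mul_sum]
      _ = ∑ α, ∑ i', ∑ j', ∑ a, ∑ b, H i' a * H j' b * (S α i' j' * S α a b) := sum5_rot _
      _ = ∑ α, ((H * S α) * H * S α).trace := by
          refine Finset.sum_congr rfl fun α _ => ?_
          rw [quad_sum_eq_trace, hHsym, hSsym α]
  -- positive semidefiniteness of H - c⁻¹ • 1
  have hHquad : ∀ x : Fin m → ℝ,
      x ⬝ᵥ (H - c⁻¹ • 1) *ᵥ x = x ⬝ᵥ H *ᵥ x - c⁻¹ * ∑ i', x i' ^ 2 := by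
    intro x
    rw [Matrix.sub_mulVec, dotProduct_sub]
    congr 1
    rw [Matrix.smul_mulVec, Matrix.one_mulVec, dotProduct_smul]
    simp [dotProduct, pow_two, smul_eq_mul]
  have hpsdT : (H - c⁻¹ • 1 : Matrix (Fin m) (Fin m) ℝ).PosSemidef := by
    rw [Matrix.posSemidef_iff_dotProduct_mulVec]; constructor
    · ext i' j'
      simp only [Matrix.conjTranspose_apply, Matrix.sub_apply, Matrix.smul_apply,
        Matrix.one_apply, star_trivial, smul_eq_mul]
      rw [show H j' i' = H i' j' from congrFun (congrFun hHsym i') j']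
      simp [eq_comm]
    · intro x
      have h1 := inducedMetric_inv_lower u q M hd x
      have h2 : (0:ℝ) ≤ x ⬝ᵥ (H - c⁻¹ • 1) *ᵥ x := by
        rw [hHquad x, hc_def]
        rw [← hH_def] at h1
        rw [hc_def] at *
        linarith
      simpa using h2
  have hB : ∀ α, (c⁻¹) ^ 2 * ((S α) * (S α)).trace ≤ ((H * S α) * H * S α).trace :=
    fun α => key_trace H (S α) (hSsym α) c⁻¹ (by positivity) hpsdT
  have hD : ‖sff u q i j‖ ^ 2 ≤ ∑ α, ((S α) * (S α)).trace := by
    calc ‖sff u q i j‖ ^ 2 = ∑ α, (S α i j) ^ 2 := (hSnorm i j).symm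
      _ ≤ ∑ α, ∑ i', ∑ j', (S α i' j') ^ 2 := by
          refine Finset.sum_le_sum fun α _ => ?_
          refine le_trans (Finset.single_le_sum (f := fun j' => (S α i j') ^ 2)
            (fun _ _ => sq_nonneg _) (Finset.mem_univ j)) ?_
          exact Finset.single_le_sum (f := fun i' => ∑ j', (S α i' j') ^ 2)
            (fun _ _ => by positivity) (Finset.mem_univ i)
      _ = ∑ α, ((S α) * (S α)).trace := by
          exact Finset.sum_congr rfl fun α _ => (trace_mul_self_eq _ (hSsym α)).symm
  have hE : c⁻¹ * ‖w‖ ^ 2 ≤ ‖sff u q i j‖ ^ 2 := by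
    rw [inv_mul_le_iff₀ hc]
    exact sff_sq_lower u q i j M hM0 hd
  have hfinal : c⁻¹ ^ 2 * (c⁻¹ * ‖w‖ ^ 2) ≤ sffNormSq u q := by
    rw [hA]
    calc c⁻¹ ^ 2 * (c⁻¹ * ‖w‖ ^ 2)
        ≤ c⁻¹ ^ 2 * ‖sff u q i j‖ ^ 2 := mul_le_mul_of_nonneg_left hE (by positivity)
      _ ≤ c⁻¹ ^ 2 * ∑ α, ((S α) * (S α)).trace := mul_le_mul_of_nonneg_left hD (by positivity)
      _ = ∑ α, c⁻¹ ^ 2 * ((S α) * (S α)).trace := Finset.mul_sum _ _ _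
      _ ≤ ∑ α, ((H * S α) * H * S α).trace := Finset.sum_le_sum fun α _ => hB α
  have hsq : ‖w‖ ^ 2 ≤ c ^ 3 * sffNormSq u q := by
    have heq : c⁻¹ ^ 2 * (c⁻¹ * ‖w‖ ^ 2) = ‖w‖ ^ 2 / c ^ 3 := by
      calc c⁻¹ ^ 2 * (c⁻¹ * ‖w‖ ^ 2) = (c⁻¹ ^ 2 * c⁻¹) * ‖w‖ ^ 2 := by ring
        _ = (c ^ 3)⁻¹ * ‖w‖ ^ 2 := by rw [← pow_succ, inv_pow]
        _ = ‖w‖ ^ 2 / c ^ 3 := by rw [div_eq_mul_inv, mul_comm]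
    rw [heq] at hfinal
    have h3 := (div_le_iff₀ (by positivity : (0:ℝ) < c ^ 3)).mp hfinal
    rw [mul_comm]
    exact h3
  calc ‖w‖ = Real.sqrt (‖w‖ ^ 2) := (Real.sqrt_sq (norm_nonneg _)).symm
    _ ≤ Real.sqrt (c ^ 3 * sffNormSq u q) := Real.sqrt_le_sqrt hsq
    _ = Real.sqrt (c ^ 3) * Real.sqrt (sffNormSq u q) := Real.sqrt_mul (by positivity) _
    _ = c ^ ((3:ℝ)/2) * sffNorm u q := by
        rw [sffNorm]
        have hpow : Real.sqrt (c ^ 3) = c ^ ((3:ℝ)/2) := by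
          rw [Real.sqrt_eq_rpow, ← Real.rpow_natCast c 3, ← Real.rpow_mul hc.le]
          norm_num
        rw [hpow]
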